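/- Let (L, [·,·], α, β) be a regular BiHom-Lie algebra. For any integers s, t, the first cohomology of the α^s β^t-adjoint representation satisfies H¹(L; ad_{s,t}) = Der_{α^{s+2}β^{t−1}}(L) / Inn_{α^{s+2}β^{t−1}}(L). -/

import Mathlib

section Helpers
variable {K L : Type*} [Field K] [AddCommGroup L] [Module K L]

lemma einv_cancel (e : L ≃ₗ[K] L) (x : L) : e (e⁻¹ x) = x := by
  calc e (e⁻¹ x) = (e * e⁻¹) x := rfl
    _ = x := by rw [mul_inv_cancel]; rfl

lemma einv_cancel' (e : L ≃ₗ[K] L) (x : L) : e⁻¹ (e x) = x := by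
  calc e⁻¹ (e x) = (e⁻¹ * e) x := rfl
    _ = x := by rw [inv_mul_cancel]; rfl

lemma comm_inv_apply (e : L ≃ₗ[K] L) (f : L → L) (h : ∀ v, f (e v) = e (f v)) (v : L) :
    f (e⁻¹ v) = e⁻¹ (f v) := by
  apply e.injective
  rw [← h, einv_cancel, einv_cancel]

lemma comm_zpow_apply (e : L ≃ₗ[K] L) (f : L → L) (h : ∀ v, f (e v) = e (f v)) :
    ∀ (n : ℤ) (v : L), f ((e ^ n) v) = (e ^ n) (f v) := by
  have hinv := comm_inv_apply e f h
  intro n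
  induction n using Int.induction_on with
  | zero => intro v; simp
  | succ n ih =>
      intro v
      rw [show ((n : ℤ) + 1) = 1 + n by ring, zpow_add, zpow_one]
      show f (e ((e ^ (n:ℤ)) v)) = e ((e ^ (n:ℤ)) (f v))
      rw [h, ih]
  | pred n ih =>
      intro v
      rw [show (-(n : ℤ) - 1) = (-1) + (-n) by ring, zpow_add, zpow_neg_one]
      show f (e⁻¹ ((e ^ (-(n:ℤ))) v)) = e⁻¹ ((e ^ (-(n:ℤ))) (f v))
      rw [hinv, ih]

lemma zpow_apply_zpow (e : L ≃ₗ[K] L) (m n : ℤ) (v : L) :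
    (e ^ m) ((e ^ n) v) = (e ^ (m + n)) v := by
  rw [zpow_add]; rfl

lemma apply_zpow (e : L ≃ₗ[K] L) (m : ℤ) (x : L) : e ((e ^ m) x) = (e ^ (m + 1)) x := by
  rw [show e ((e ^ m) x) = (e ^ (1:ℤ)) ((e ^ m) x) by rw [zpow_one], zpow_apply_zpow, add_comm]

lemma zpow_apply_self (e : L ≃ₗ[K] L) (m : ℤ) (x : L) : (e ^ m) (e x) = (e ^ (m + 1)) x := by
  rw [show e x = (e ^ (1:ℤ)) x by rw [zpow_one], zpow_apply_zpow]

lemma zpow_apply_inv (e : L ≃ₗ[K] L) (m : ℤ) (x : L) : (e ^ m) (e⁻¹ x) = (e ^ (m - 1)) x := by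
  rw [show (e⁻¹ : L ≃ₗ[K] L) x = (e ^ (-1:ℤ)) x by rw [zpow_neg_one], zpow_apply_zpow,
    sub_eq_add_neg]

lemma shuffle {M : Type*} [AddCommGroup M] {a b z : M} (h : -a + -b + z = 0) : z = b + a := by
  have h2 : z - (b + a) = 0 := by rw [← h]; abel
  exact sub_eq_zero.mp h2

end Helpers

/-- `H¹(L; ad_{s,t}) = Der_{α^{s+2}β^{t-1}}(L) / Inn_{α^{s+2}β^{t-1}}(L)` :
the 1-cocycles of the `αˢβᵗ`-adjoint representation are exactly the
`α^{s+2}β^{t-1}`-derivations, and the 1-coboundaries are exactly the inner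
`α^{s+2}β^{t-1}`-derivations. -/
theorem stmt_18 {K : Type*} [Field K] {L : Type*} [AddCommGroup L] [Module K L]
(br : L →ₗ[K] L →ₗ[K] L) (α β : L ≃ₗ[K] L)
    (hcomm : ∀ a, α (β a) = β (α a))
    (hαm : ∀ a b, α (br a b) = br (α a) (α b))
    (hβm : ∀ a b, β (br a b) = br (β a) (β b))
    (hskew : ∀ a a', br (β a) (α a') = - br (β a') (α a))
    (hjac : ∀ a a' a'', br (β (β a)) (br (β a') (α a''))
      + br (β (β a')) (br (β a'') (α a))
      + br (β (β a'')) (br (β a) (α a')) = 0)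
    (s t : ℤ) :
    -- Z¹(L; ad_{s,t}) = Der_{α^{s+2}β^{t-1}}(L)
    ({D : Module.End K L | (∀ v, D (α v) = α (D v)) ∧ (∀ v, D (β v) = β (D v)) ∧
        ∀ u v, - br ((α ^ (s + 1) * β ^ t) u) (D v) + br ((α ^ (s + 1) * β ^ t) v) (D u)
          + D (br ((α⁻¹ * β) u) v) = 0}
      = {D : Module.End K L | (∀ v, D (α v) = α (D v)) ∧ (∀ v, D (β v) = β (D v)) ∧
        ∀ u v, D (br u v) = br (D u) ((α ^ (s + 2) * β ^ (t - 1)) v)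
          + br ((α ^ (s + 2) * β ^ (t - 1)) u) (D v)}) ∧
    -- B¹(L; ad_{s,t}) = Inn_{α^{s+2}β^{t-1}}(L)
    ({D : Module.End K L | ∃ u, α u = u ∧ β u = u ∧
        ∀ v, D v = - br ((α ^ (s + 1) * β ^ (t - 1)) v) u}
      = {D : Module.End K L | ∃ u, α u = u ∧ β u = u ∧
        ∀ v, D v = - br ((α ^ (s + 2 - 1) * β ^ (t - 1)) v) u}) := by
  have hβα : ∀ v, β (α v) = α (β v) := fun v => (hcomm v).symm
  have hαzβ : ∀ (n : ℤ) (v : L), β ((α ^ n) v) = (α ^ n) (β v) :=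
    comm_zpow_apply α β hβα
  have hβzα : ∀ (n : ℤ) (v : L), α ((β ^ n) v) = (β ^ n) (α v) :=
    comm_zpow_apply β α hcomm
  have hw : ∀ w : L, α (β⁻¹ (α⁻¹ (β w))) = w := by
    intro w
    have h1 : β⁻¹ (α⁻¹ (β w)) = α⁻¹ (β⁻¹ (β w)) :=
      comm_inv_apply α (⇑β⁻¹) (fun v => (comm_inv_apply β (⇑α) hcomm v).symm) (β w)
    rw [h1, einv_cancel', einv_cancel]
  have key : ∀ v w : L, br ((α ^ (s + 1) * β ^ t) v) (α (β⁻¹ w))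
      = - br w ((α ^ (s + 2) * β ^ (t - 1)) v) := by
    intro v w
    have h1 : (α ^ (s + 1) * β ^ t) v = β ((α ^ (s + 1)) ((β ^ (t - 1)) v)) := by
      show (α ^ (s + 1)) ((β ^ t) v) = β ((α ^ (s + 1)) ((β ^ (t - 1)) v))
      rw [hαzβ]
      rw [show β ((β ^ (t - 1)) v) = (β ^ (t - 1 + 1)) v from apply_zpow β (t - 1) v,
        show t - 1 + 1 = t by ring]
    have h2 : (α ^ (s + 2) * β ^ (t - 1)) v = α ((α ^ (s + 1)) ((β ^ (t - 1)) v)) := by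
      show (α ^ (s + 2)) ((β ^ (t - 1)) v) = α ((α ^ (s + 1)) ((β ^ (t - 1)) v))
      rw [apply_zpow, show s + 1 + 1 = s + 2 by ring]
    rw [h1, hskew, einv_cancel, h2]
  have key' : ∀ v w : L, br ((α ^ (s + 1) * β ^ t) v) w
      = - br (α⁻¹ (β w)) ((α ^ (s + 2) * β ^ (t - 1)) v) := by
    intro v w
    have := key v (α⁻¹ (β w))
    rwa [hw w] at this
  constructor
  · ext D
    simp only [Set.mem_setOf_eq]
    constructor
    · rintro ⟨h1, h2, h3⟩
      refine ⟨h1, h2, fun u v => ?_⟩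
      have h := h3 ((α * β⁻¹) u) v
      have e1 : (α⁻¹ * β) ((α * β⁻¹) u) = u := by
        show α⁻¹ (β (α (β⁻¹ u))) = u
        rw [← hcomm, einv_cancel', einv_cancel]
      have e2 : (α ^ (s + 1) * β ^ t) ((α * β⁻¹) u) = (α ^ (s + 2) * β ^ (t - 1)) u := by
        show (α ^ (s + 1)) ((β ^ t) (α (β⁻¹ u))) = (α ^ (s + 2)) ((β ^ (t - 1)) u)
        rw [← hβzα, zpow_apply_inv, zpow_apply_self, show s + 1 + 1 = s + 2 by ring]
      have e3 : D ((α * β⁻¹) u) = α (β⁻¹ (D u)) := by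
        show D (α (β⁻¹ u)) = α (β⁻¹ (D u))
        rw [h1, comm_inv_apply β (⇑D) h2]
      rw [e1, e2, e3, key v (D u)] at h
      exact shuffle h
    · rintro ⟨h1, h2, h3⟩
      refine ⟨h1, h2, fun u v => ?_⟩
      have h := h3 ((α⁻¹ * β) u) v
      have e5 : (α ^ (s + 2) * β ^ (t - 1)) ((α⁻¹ * β) u) = (α ^ (s + 1) * β ^ t) u := by
        show (α ^ (s + 2)) ((β ^ (t - 1)) (α⁻¹ (β u))) = (α ^ (s + 1)) ((β ^ t) u)
        rw [comm_inv_apply α (⇑(β ^ (t - 1))) (fun v => (hβzα (t - 1) v).symm) (β u),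
          zpow_apply_inv, zpow_apply_self, show s + 2 - 1 = s + 1 by ring,
          show t - 1 + 1 = t by ring]
      have e6 : D ((α⁻¹ * β) u) = α⁻¹ (β (D u)) := by
        show D (α⁻¹ (β u)) = α⁻¹ (β (D u))
        rw [comm_inv_apply α (⇑D) h1, h2]
      rw [e5, e6] at h
      rw [h, key' v (D u)]
      abel
  · rw [show s + 2 - 1 = s + 1 by ring]
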